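/- Let (X,d) be a normal, regular semi-metric space and let F(X) be the set of non-empty bounded subsets of X. Then the Hausdorff-Pompeiu distance d_HP(A,B) := inf{r > 0 : A ⊆ B(r) and B ⊆ A(r)} is a finite-valued symmetric pre-metric on F(X), and (F(X), d_HP) is itself normal and regular, with Φ_{d_HP}(u,v) ≤ Φ_d(u+ε, v+ε) for all u,v ≥ 0 and ε > 0. -/

import Mathlib

open Filter Topology Set

noncomputable section

/-- A semi-metric: symmetric, vanishing exactly on the diagonal (no triangle inequality). -/
def IsSemiMetric {X : Type*} (d : X → X → NNReal) : Prop :=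
  (∀ x y, d x y = d y x) ∧ ∀ x y, d x y = 0 ↔ x = y

/-- Ball of radius `r` around `x`. -/
def SMBall {X : Type*} (d : X → X → NNReal) (x : X) (r : NNReal) : Set X := {y | d x y < r}

/-- The basic triangle function `Φ_d(u,v) = sup{d(x,y) : ∃ z, d(x,z) ≤ u, d(y,z) ≤ v}`. -/
def SMPhi {X : Type*} (d : X → X → NNReal) (u v : NNReal) : ENNReal :=
  ⨆ (p : X × X) (_ : ∃ z : X, d p.1 z ≤ u ∧ d p.2 z ≤ v), (d p.1 p.2 : ENNReal)

/-- Normal property: the basic triangle function is finite-valued. -/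
def SMNormal {X : Type*} (d : X → X → NNReal) : Prop := ∀ u v : NNReal, SMPhi d u v < ⊤

/-- Regular property: the basic triangle function is continuous at `(0,0)`. -/
def SMRegular {X : Type*} (d : X → X → NNReal) : Prop :=
  ∀ ε : NNReal, 0 < ε → ∃ δ : NNReal, 0 < δ ∧
    ∀ u v : NNReal, u ≤ δ → v ≤ δ → SMPhi d u v < (ε : ENNReal)

/-- Cauchy sequence with respect to a semi- or pre-metric. -/
def SMCauchy {X : Type*} (d : X → X → NNReal) (x : ℕ → X) : Prop :=
  ∀ ε : NNReal, 0 < ε → ∃ N : ℕ, ∀ m ≥ N, ∀ n ≥ N, d (x m) (x n) < ε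

/-- Completeness: every Cauchy sequence converges. -/
def SMComplete {X : Type*} (d : X → X → NNReal) : Prop :=
  ∀ x : ℕ → X, SMCauchy d x → ∃ l : X, Tendsto (fun n => d (x n) l) atTop (𝓝 0)

/-- Boundedness: contained in some ball. -/
def SMBounded {X : Type*} (d : X → X → NNReal) (H : Set X) : Prop :=
  ∃ (x₀ : X) (r : NNReal), H ⊆ SMBall d x₀ r

/-- Comparison function: increasing, with iterates tending to zero on `(0,∞)`. -/
def SMComparison (φ : NNReal → NNReal) : Prop :=
  Monotone φ ∧ ∀ t : NNReal, 0 < t → Tendsto (fun n => φ^[n] t) atTop (𝓝 0)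

/-- Right-continuity of a function `[0,∞) → [0,∞)`. -/
def SMRightCont (φ : NNReal → NNReal) : Prop :=
  ∀ t : NNReal, ContinuousWithinAt φ (Ici t) t

/-- Diameter of a set. -/
def SMdiam {X : Type*} (d : X → X → NNReal) (H : Set X) : ENNReal :=
  ⨆ (x ∈ H) (y ∈ H), (d x y : ENNReal)

/-- `r`-neighborhood of a set. -/
def SMnbhd {X : Type*} (d : X → X → NNReal) (A : Set X) (r : NNReal) : Set X :=
  ⋃ x ∈ A, SMBall d x r

/-- Kuratowski measure of non-compactness. -/
def SMchi {X : Type*} (d : X → X → NNReal) (H : Set X) : ENNReal :=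
  sInf {c : ENNReal | ∃ r : NNReal, c = (r : ENNReal) ∧ 0 < r ∧
    ∃ s : Finset X, H ⊆ ⋃ x ∈ s, SMBall d x r}

/-- Hausdorff-Pompeiu distance between subsets. -/
def SMdHP {X : Type*} (d : X → X → NNReal) (A B : Set X) : ENNReal :=
  sInf {c : ENNReal | ∃ r : NNReal, c = (r : ENNReal) ∧ 0 < r ∧
    A ⊆ SMnbhd d B r ∧ B ⊆ SMnbhd d A r}

/-- Open sets of the semi-metric topology. -/
def SMOpen {X : Type*} (d : X → X → NNReal) (U : Set X) : Prop :=
  ∀ x ∈ U, ∃ r : NNReal, 0 < r ∧ SMBall d x r ⊆ U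

/-- Closed sets of the semi-metric topology. -/
def SMClosed {X : Type*} (d : X → X → NNReal) (A : Set X) : Prop := SMOpen d Aᶜ

/-- Max semi-metric on `X^q`. -/
def SMmax {X : Type*} (q : ℕ) (d : X → X → NNReal) (x y : Fin q → X) : NNReal :=
  Finset.univ.sup fun i => d (x i) (y i)

/-- The set of non-empty bounded subsets of `X`. -/
def SMF {X : Type*} (d : X → X → NNReal) : Type _ :=
  {A : Set X // A.Nonempty ∧ SMBounded d A}

/-- The Hausdorff-Pompeiu distance as an `NNReal`-valued map on non-empty bounded sets. -/
def SMdHPn {X : Type*} (d : X → X → NNReal) (A B : SMF d) : NNReal :=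
  (SMdHP d A.1 B.1).toNNReal


section Aux

variable {X : Type*} (d : X → X → NNReal)

lemma le_SMPhi {x y z : X} {u v : NNReal} (h1 : d x z ≤ u) (h2 : d y z ≤ v) :
    (d x y : ENNReal) ≤ SMPhi d u v :=
  le_iSup_of_le (x, y) (le_iSup_of_le ⟨z, h1, h2⟩ le_rfl)

lemma SMPhi_mono {u v u' v' : NNReal} (hu : u ≤ u') (hv : v ≤ v') :
    SMPhi d u v ≤ SMPhi d u' v' := by
  refine iSup₂_le fun p hp => ?_
  obtain ⟨z, h1, h2⟩ := hp
  exact le_SMPhi d (h1.trans hu) (h2.trans hv)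

lemma mem_SMnbhd {A : Set X} {r : NNReal} {y : X} (x : X) (hx : x ∈ A) (h : d x y < r) :
    y ∈ SMnbhd d A r :=
  Set.mem_iUnion₂.mpr ⟨x, hx, h⟩

lemma SMdHP_le {A B : Set X} {r : NNReal} (hr : 0 < r)
    (h1 : A ⊆ SMnbhd d B r) (h2 : B ⊆ SMnbhd d A r) : SMdHP d A B ≤ r :=
  sInf_le ⟨r, rfl, hr, h1, h2⟩

lemma SMdHP_lt_top (hd : IsSemiMetric d) (hn : SMNormal d) (A B : SMF d) :
    SMdHP d A.1 B.1 < ⊤ := by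
  obtain ⟨⟨a₀, ha₀⟩, x₀, r₁, hA⟩ := A.2
  obtain ⟨⟨b₀, hb₀⟩, y₀, r₂, hB⟩ := B.2
  set c := d x₀ y₀ with hc
  set m₁ := (SMPhi d r₁ c).toNNReal with hm₁
  have key : ∀ a ∈ A.1, ∀ b ∈ B.1, (d a b : ENNReal) ≤ SMPhi d m₁ r₂ := by
    intro a ha b hb
    have hax : d a x₀ ≤ r₁ := by rw [hd.1 a x₀]; exact (hA ha).le
    have hay : (d a y₀ : ENNReal) ≤ SMPhi d r₁ c :=
      le_SMPhi d hax (by rw [hd.1 y₀ x₀])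
    have hay' : d a y₀ ≤ m₁ := by
      rw [hm₁]
      exact ENNReal.le_toNNReal_of_coe_le hay (hn r₁ c).ne
    have hby : d b y₀ ≤ r₂ := by rw [hd.1 b y₀]; exact (hB hb).le
    exact le_SMPhi d hay' hby
  set m₂ := (SMPhi d m₁ r₂).toNNReal with hm₂
  have key' : ∀ a ∈ A.1, ∀ b ∈ B.1, d a b ≤ m₂ := fun a ha b hb => by
    rw [hm₂]; exact ENNReal.le_toNNReal_of_coe_le (key a ha b hb) (hn m₁ r₂).ne
  have h1 : A.1 ⊆ SMnbhd d B.1 (m₂ + 1) := fun a ha =>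
    mem_SMnbhd d b₀ hb₀ (by
      rw [hd.1 b₀ a]
      calc d a b₀ ≤ m₂ := key' a ha b₀ hb₀
        _ < m₂ + 1 := lt_add_of_pos_right _ one_pos)
  have h2 : B.1 ⊆ SMnbhd d A.1 (m₂ + 1) := fun b hb =>
    mem_SMnbhd d a₀ ha₀ (calc d a₀ b ≤ m₂ := key' a₀ ha₀ b hb
        _ < m₂ + 1 := lt_add_of_pos_right _ one_pos)
  exact lt_of_le_of_lt (SMdHP_le d (by positivity) h1 h2) ENNReal.coe_lt_top

lemma SMdHP_comm (A B : Set X) : SMdHP d A B = SMdHP d B A := by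
  unfold SMdHP
  congr 1
  ext cc
  constructor <;> rintro ⟨r, rfl, hr, h1, h2⟩ <;> exact ⟨r, rfl, hr, h2, h1⟩

lemma SMdHP_self (hd : IsSemiMetric d) (A : Set X) (hA : A.Nonempty) : SMdHP d A A = 0 := by
  refine le_antisymm (ENNReal.le_of_forall_pos_le_add fun ε hε _ => ?_) zero_le
  rw [zero_add]
  have hsub : A ⊆ SMnbhd d A ε := fun x hx =>
    mem_SMnbhd d x hx (by rw [(hd.2 x x).mpr rfl]; exact hε)
  exact SMdHP_le d hε hsub hsub

/-- Key lemma: bound on the HP distance via the triangle function. -/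
lemma SMdHP_triangle (hd : IsSemiMetric d) (hn : SMNormal d)
    {A B C : Set X} {u v ε : NNReal} (hε : 0 < ε)
    (hAC : SMdHP d A C ≤ (u : ENNReal)) (hBC : SMdHP d B C ≤ (v : ENNReal)) :
    SMdHP d A B ≤ SMPhi d (u + ε) (v + ε) := by
  have hAC' : SMdHP d A C < ((u + ε : NNReal) : ENNReal) :=
    lt_of_le_of_lt hAC (ENNReal.coe_lt_coe.mpr (lt_add_of_pos_right u hε))
  have hBC' : SMdHP d B C < ((v + ε : NNReal) : ENNReal) :=
    lt_of_le_of_lt hBC (ENNReal.coe_lt_coe.mpr (lt_add_of_pos_right v hε))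
  obtain ⟨c₁, ⟨s₁, rfl, hs₁, hA1, hC1⟩, hlt₁⟩ := sInf_lt_iff.mp hAC'
  obtain ⟨c₂, ⟨s₂, rfl, hs₂, hB2, hC2⟩, hlt₂⟩ := sInf_lt_iff.mp hBC'
  have hs₁' : s₁ ≤ u + ε := (ENNReal.coe_lt_coe.mp hlt₁).le
  have hs₂' : s₂ ≤ v + ε := (ENNReal.coe_lt_coe.mp hlt₂).le
  set M := SMPhi d (u + ε) (v + ε) with hM
  have hMt : M ≠ ⊤ := (hn _ _).ne
  have key : ∀ R : NNReal, M < (R : ENNReal) → SMdHP d A B ≤ (R : ENNReal) := by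
    intro R hR
    have hR0 : 0 < R := ENNReal.coe_pos.mp ((show (0:ENNReal) ≤ M from zero_le).trans_lt hR)
    have hdlt : ∀ a ∈ A, ∀ b ∈ B, (∃ z, d a z ≤ u + ε ∧ d b z ≤ v + ε) → d a b < R := by
      intro a ha b hb hz
      obtain ⟨z, h1, h2⟩ := hz
      have := (le_SMPhi d h1 h2).trans_lt hR
      exact_mod_cast this
    have h1 : A ⊆ SMnbhd d B R := by
      intro a ha
      obtain ⟨c, hc, hac⟩ := Set.mem_iUnion₂.mp (hA1 ha)
      obtain ⟨b, hb, hbc⟩ := Set.mem_iUnion₂.mp (hC2 hc)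
      have hac' : d a c ≤ u + ε := by rw [hd.1 a c]; exact hac.le.trans hs₁'
      have hbc' : d b c ≤ v + ε := hbc.le.trans hs₂'
      refine mem_SMnbhd d b hb ?_
      rw [hd.1 b a]
      exact hdlt a ha b hb ⟨c, hac', hbc'⟩
    have h2 : B ⊆ SMnbhd d A R := by
      intro b hb
      obtain ⟨c, hc, hbc⟩ := Set.mem_iUnion₂.mp (hB2 hb)
      obtain ⟨a, ha, hac⟩ := Set.mem_iUnion₂.mp (hC1 hc)
      have hac' : d a c ≤ u + ε := hac.le.trans hs₁'
      have hbc' : d b c ≤ v + ε := by rw [hd.1 b c]; exact hbc.le.trans hs₂'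
      exact mem_SMnbhd d a ha (hdlt a ha b hb ⟨c, hac', hbc'⟩)
    exact SMdHP_le d hR0 h1 h2
  by_contra hcon
  push_neg at hcon
  obtain ⟨R, hMR, hRd⟩ := ENNReal.lt_iff_exists_nnreal_btwn.mp hcon
  exact absurd (key R hMR) (not_le.mpr hRd)

end Aux

theorem stmt10 {X : Type*} (d : X → X → NNReal) (hd : IsSemiMetric d)
    (hn : SMNormal d) (hr : SMRegular d) :
    (∀ A B : SMF d, SMdHP d A.1 B.1 < ⊤) ∧
    (∀ A B : SMF d, SMdHPn d A B = SMdHPn d B A) ∧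
    (∀ A : SMF d, SMdHPn d A A = 0) ∧
    SMNormal (SMdHPn d) ∧ SMRegular (SMdHPn d) ∧
    ∀ (u v ε : NNReal), 0 < ε →
      SMPhi (SMdHPn d) u v ≤ SMPhi d (u + ε) (v + ε) := by
  have hfin := SMdHP_lt_top d hd hn
  have hcoe : ∀ A B : SMF d, (SMdHPn d A B : ENNReal) = SMdHP d A.1 B.1 := fun A B =>
    ENNReal.coe_toNNReal (hfin A B).ne
  have hmain : ∀ (u v ε : NNReal), 0 < ε →
      SMPhi (SMdHPn d) u v ≤ SMPhi d (u + ε) (v + ε) := by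
    intro u v ε hε
    refine iSup₂_le fun p hp => ?_
    obtain ⟨C, h1, h2⟩ := hp
    have h1' : SMdHP d p.1.1 C.1 ≤ (u : ENNReal) := by
      rw [← hcoe p.1 C]; exact_mod_cast h1
    have h2' : SMdHP d p.2.1 C.1 ≤ (v : ENNReal) := by
      rw [← hcoe p.2 C]; exact_mod_cast h2
    rw [hcoe p.1 p.2]
    exact SMdHP_triangle d hd hn hε h1' h2'
  refine ⟨hfin, ?_, ?_, ?_, ?_, hmain⟩
  · intro A B; unfold SMdHPn; rw [SMdHP_comm]
  · intro A; unfold SMdHPn; rw [SMdHP_self d hd A.1 A.2.1]; simp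
  · intro u v
    exact lt_of_le_of_lt (hmain u v 1 one_pos) (hn (u + 1) (v + 1))
  · intro ε hε
    obtain ⟨δ, hδ, hδε⟩ := hr ε hε
    refine ⟨δ / 2, by positivity, fun u v hu hv => ?_⟩
    have h2 : u + δ / 2 ≤ δ := by
      calc u + δ / 2 ≤ δ / 2 + δ / 2 := add_le_add_left hu _
        _ = δ := add_halves δ
    have h3 : v + δ / 2 ≤ δ := by
      calc v + δ / 2 ≤ δ / 2 + δ / 2 := add_le_add_left hv _
        _ = δ := add_halves δ
    calc SMPhi (SMdHPn d) u v ≤ SMPhi d (u + δ/2) (v + δ/2) := hmain u v (δ/2) (by positivity)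
      _ ≤ SMPhi d δ δ := SMPhi_mono d h2 h3
      _ < ε := hδε δ δ le_rfl le_rfl
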